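/- There exists a fermionic unextendible product basis of cardinality 5 in $\wedge^2 \mathbb{C}^4$: five pairwise orthogonal nonzero decomposable 2-vectors in $\wedge^2 \mathbb{C}^4$ such that no nonzero decomposable 2-vector is orthogonal to all of them. (Since $\dim \wedge^2 \mathbb{C}^4 = 6$ and $5 = 2(4-2)+1$, this is a nontrivial FUPB of minimum possible cardinality.) -/

import Mathlib

open scoped InnerProductSpace

noncomputable section

/-- The `N`-fold tensor power of `ℂ^M`, realized as the Euclidean space with
orthonormal basis indexed by multi-indices `Fin N → Fin M`. -/
abbrev TensorPow (N M : ℕ) : Type := EuclideanSpace ℂ (Fin N → Fin M)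

/-- The wedge (Slater determinant) of a family of `N` vectors in `ℂ^M`:
`|v 0⟩ ∧ ⋯ ∧ |v (N-1)⟩ = ∑ σ, sgn σ • |v σ(0), …, v σ(N-1)⟩`. -/
def wedge {N M : ℕ} (v : Fin N → EuclideanSpace ℂ (Fin M)) : TensorPow N M :=
  WithLp.toLp 2 (fun x => ∑ σ : Equiv.Perm (Fin N), ((Equiv.Perm.sign σ : ℤ) : ℂ) * ∏ k, v (σ k) (x k))

/-- The exterior power `⋀^N ℂ^M`, i.e. the subspace of antisymmetric tensors
in `(ℂ^M)^{⊗N}`. -/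
def exteriorPow (N M : ℕ) : Submodule ℂ (TensorPow N M) where
  carrier := {ψ | ∀ σ : Equiv.Perm (Fin N), ∀ x : Fin N → Fin M,
    ψ (x ∘ σ) = ((Equiv.Perm.sign σ : ℤ) : ℂ) * ψ x}
  add_mem' := by
    intro a b ha hb σ x
    have h1 := ha σ x
    have h2 := hb σ x
    show a (x ∘ σ) + b (x ∘ σ) = ((Equiv.Perm.sign σ : ℤ) : ℂ) * (a x + b x)
    rw [h1, h2]; ring
  zero_mem' := by
    intro σ x
    show (0 : ℂ) = ((Equiv.Perm.sign σ : ℤ) : ℂ) * (0 : ℂ)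
    ring
  smul_mem' := by
    intro c a ha σ x
    have h1 := ha σ x
    show c * a (x ∘ σ) = ((Equiv.Perm.sign σ : ℤ) : ℂ) * (c * a x)
    rw [h1]; ring

/-- A decomposable (Slater determinant) vector in `⋀^N ℂ^M`. -/
def IsSlater {N M : ℕ} (ψ : TensorPow N M) : Prop :=
  ∃ v : Fin N → EuclideanSpace ℂ (Fin M), ψ = wedge v



/-! ### Auxiliary material for the construction -/

/-- A primitive cube root of unity. -/
def om : ℂ := (-1 + (Real.sqrt 3 : ℂ) * Complex.I) / 2

lemma sqrt3_sq : ((Real.sqrt 3 : ℝ) : ℂ)^2 = 3 := by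
  norm_cast
  rw [Real.sq_sqrt]; norm_num

lemma hom : om^2 + om + 1 = 0 := by
  unfold om
  linear_combination (((Real.sqrt 3 : ℝ):ℂ)^2/4) * Complex.I_sq + (-1/4 : ℂ) * sqrt3_sq

lemma om_ne : om ≠ 0 := by
  intro h
  have h2 := hom
  rw [h] at h2
  norm_num at h2

lemma conj_om : (starRingEnd ℂ) om = om^2 := by
  have h2 : om^2 = (-1 - (Real.sqrt 3 : ℂ) * Complex.I) / 2 := by
    unfold om
    linear_combination (((Real.sqrt 3 : ℝ):ℂ)^2/4) * Complex.I_sq + (-1/4 : ℂ) * sqrt3_sq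
  rw [h2]
  unfold om
  rw [map_div₀, map_add, map_mul, Complex.conj_I, Complex.conj_ofReal, map_ofNat, map_neg, map_one]
  ring

lemma sum_perm_two (f : Equiv.Perm (Fin 2) → ℂ) :
    ∑ σ : Equiv.Perm (Fin 2), f σ = f 1 + f (Equiv.swap 0 1) := by
  rw [show (Finset.univ : Finset (Equiv.Perm (Fin 2))) = {1, Equiv.swap 0 1} from by decide]
  rw [Finset.sum_insert (by decide), Finset.sum_singleton]

lemma wedge_apply_two (v w : EuclideanSpace ℂ (Fin 4)) (x : Fin 2 → Fin 4) :
    wedge ![v, w] x = v (x 0) * w (x 1) - w (x 0) * v (x 1) := by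
  unfold wedge
  rw [WithLp.ofLp_toLp, sum_perm_two]
  simp [Fin.prod_univ_two, Equiv.Perm.sign_swap (by decide : (0 : Fin 2) ≠ 1),
    Equiv.swap_apply_left, Equiv.swap_apply_right]
  ring

lemma sum_fn_two (f : (Fin 2 → Fin 4) → ℂ) :
    ∑ x : Fin 2 → Fin 4, f x = ∑ i : Fin 4, ∑ j : Fin 4, f ![i, j] := by
  have e1 : ∑ x : Fin 2 → Fin 4, f x = ∑ p : Fin 4 × Fin 4, f ![p.1, p.2] := by
    apply Fintype.sum_equiv (piFinTwoEquiv fun _ => Fin 4)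
    intro x
    have h : ![x 0, x 1] = x := by funext i; fin_cases i <;> rfl
    simp [piFinTwoEquiv, h]
  rw [e1, Fintype.sum_prod_type]

lemma inner_wedge (a b c d : EuclideanSpace ℂ (Fin 4)) :
    ⟪wedge ![a, b], wedge ![c, d]⟫_ℂ =
      2 * ((∑ i, (starRingEnd ℂ) (a i) * c i) * (∑ i, (starRingEnd ℂ) (b i) * d i)
        - (∑ i, (starRingEnd ℂ) (a i) * d i) * (∑ i, (starRingEnd ℂ) (b i) * c i)) := by
  rw [PiLp.inner_apply]
  simp only [RCLike.inner_apply']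
  rw [sum_fn_two (fun x => (starRingEnd ℂ) (wedge ![a, b] x) * wedge ![c, d] x)]
  have key : ∀ i j : Fin 4, (starRingEnd ℂ) (wedge ![a, b] ![i, j]) * wedge ![c, d] ![i, j]
      = ((starRingEnd ℂ) (a i) * c i) * ((starRingEnd ℂ) (b j) * d j)
        - ((starRingEnd ℂ) (a i) * d i) * ((starRingEnd ℂ) (b j) * c j)
        - ((starRingEnd ℂ) (b i) * c i) * ((starRingEnd ℂ) (a j) * d j)
        + ((starRingEnd ℂ) (b i) * d i) * ((starRingEnd ℂ) (a j) * c j) := by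
    intro i j
    rw [wedge_apply_two, wedge_apply_two]
    rw [show (![i, j] : Fin 2 → Fin 4) 0 = i from rfl, show (![i, j] : Fin 2 → Fin 4) 1 = j from rfl]
    rw [map_sub, map_mul, map_mul]
    ring
  simp only [key]
  have hs : ∀ (F G : Fin 4 → ℂ), ∑ i : Fin 4, ∑ j : Fin 4, F i * G j
      = (∑ i : Fin 4, F i) * (∑ j : Fin 4, G j) := by
    intro F G
    rw [Finset.sum_mul_sum]
  simp only [Finset.sum_add_distrib, Finset.sum_sub_distrib, hs]
  ring

def a1 : EuclideanSpace ℂ (Fin 4) := WithLp.toLp 2 ![1, 0, -1, om]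
def b1 : EuclideanSpace ℂ (Fin 4) := WithLp.toLp 2 ![0, 1, 1, 1]
def a2 : EuclideanSpace ℂ (Fin 4) := WithLp.toLp 2 ![om, 0, -1, 1]
def b2 : EuclideanSpace ℂ (Fin 4) := WithLp.toLp 2 ![0, om, om, 1]
def a3 : EuclideanSpace ℂ (Fin 4) := WithLp.toLp 2 ![1, 0, -om, 1]
def b3 : EuclideanSpace ℂ (Fin 4) := WithLp.toLp 2 ![0, 1, 1, om]
def a4 : EuclideanSpace ℂ (Fin 4) := WithLp.toLp 2 ![1, 0, 0, 0]
def b4 : EuclideanSpace ℂ (Fin 4) := WithLp.toLp 2 ![0, 1, -1, 0]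
def a5 : EuclideanSpace ℂ (Fin 4) := WithLp.toLp 2 ![0, 1, om, 0]
def b5 : EuclideanSpace ℂ (Fin 4) := WithLp.toLp 2 ![0, 0, 0, 1]

@[simp] lemma a1_0 : a1 0 = 1 := rfl
@[simp] lemma a1_1 : a1 1 = 0 := rfl
@[simp] lemma a1_2 : a1 2 = -1 := rfl
@[simp] lemma a1_3 : a1 3 = om := rfl
@[simp] lemma b1_0 : b1 0 = 0 := rfl
@[simp] lemma b1_1 : b1 1 = 1 := rfl
@[simp] lemma b1_2 : b1 2 = 1 := rfl
@[simp] lemma b1_3 : b1 3 = 1 := rfl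
@[simp] lemma a2_0 : a2 0 = om := rfl
@[simp] lemma a2_1 : a2 1 = 0 := rfl
@[simp] lemma a2_2 : a2 2 = -1 := rfl
@[simp] lemma a2_3 : a2 3 = 1 := rfl
@[simp] lemma b2_0 : b2 0 = 0 := rfl
@[simp] lemma b2_1 : b2 1 = om := rfl
@[simp] lemma b2_2 : b2 2 = om := rfl
@[simp] lemma b2_3 : b2 3 = 1 := rfl
@[simp] lemma a3_0 : a3 0 = 1 := rfl
@[simp] lemma a3_1 : a3 1 = 0 := rfl
@[simp] lemma a3_2 : a3 2 = -om := rfl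
@[simp] lemma a3_3 : a3 3 = 1 := rfl
@[simp] lemma b3_0 : b3 0 = 0 := rfl
@[simp] lemma b3_1 : b3 1 = 1 := rfl
@[simp] lemma b3_2 : b3 2 = 1 := rfl
@[simp] lemma b3_3 : b3 3 = om := rfl
@[simp] lemma a4_0 : a4 0 = 1 := rfl
@[simp] lemma a4_1 : a4 1 = 0 := rfl
@[simp] lemma a4_2 : a4 2 = 0 := rfl
@[simp] lemma a4_3 : a4 3 = 0 := rfl
@[simp] lemma b4_0 : b4 0 = 0 := rfl
@[simp] lemma b4_1 : b4 1 = 1 := rfl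
@[simp] lemma b4_2 : b4 2 = -1 := rfl
@[simp] lemma b4_3 : b4 3 = 0 := rfl
@[simp] lemma a5_0 : a5 0 = 0 := rfl
@[simp] lemma a5_1 : a5 1 = 1 := rfl
@[simp] lemma a5_2 : a5 2 = om := rfl
@[simp] lemma a5_3 : a5 3 = 0 := rfl
@[simp] lemma b5_0 : b5 0 = 0 := rfl
@[simp] lemma b5_1 : b5 1 = 0 := rfl
@[simp] lemma b5_2 : b5 2 = 0 := rfl
@[simp] lemma b5_3 : b5 3 = 1 := rfl


set_option maxHeartbeats 2000000 in
/-- There exists a fermionic unextendible product basis of cardinality 5 in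
`⋀² ℂ⁴`: five pairwise orthogonal nonzero decomposable 2-vectors such that no
nonzero decomposable 2-vector is orthogonal to all of them. -/
theorem exists_FUPB_card_five_in_wedge2_C4 :
    ∃ ψ : Fin 5 → TensorPow 2 4,
      (∀ i, IsSlater (ψ i)) ∧ (∀ i, ψ i ≠ 0) ∧
      (∀ i j, i ≠ j → ⟪ψ i, ψ j⟫_ℂ = 0) ∧
      (∀ v w : EuclideanSpace ℂ (Fin 4),
        (∀ i, ⟪ψ i, wedge ![v, w]⟫_ℂ = 0) → wedge ![v, w] = 0) := by
  refine ⟨![wedge ![a1, b1], wedge ![a2, b2], wedge ![a3, b3], wedge ![a4, b4], wedge ![a5, b5]],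
    ?_, ?_, ?_, ?_⟩
  · intro i
    fin_cases i
    · exact ⟨![a1, b1], rfl⟩
    · exact ⟨![a2, b2], rfl⟩
    · exact ⟨![a3, b3], rfl⟩
    · exact ⟨![a4, b4], rfl⟩
    · exact ⟨![a5, b5], rfl⟩
  · intro i
    fin_cases i
    · intro hh
      have h0 : wedge ![a1, b1] ![0, 1] = 0 := by
        rw [show wedge ![a1, b1] = 0 from hh]; rfl
      rw [wedge_apply_two] at h0
      simp at h0
    · intro hh
      have h0 : wedge ![a2, b2] ![0, 3] = 0 := by
        rw [show wedge ![a2, b2] = 0 from hh]; rfl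
      rw [wedge_apply_two] at h0
      simp at h0
      exact om_ne h0
    · intro hh
      have h0 : wedge ![a3, b3] ![0, 1] = 0 := by
        rw [show wedge ![a3, b3] = 0 from hh]; rfl
      rw [wedge_apply_two] at h0
      simp at h0
    · intro hh
      have h0 : wedge ![a4, b4] ![0, 1] = 0 := by
        rw [show wedge ![a4, b4] = 0 from hh]; rfl
      rw [wedge_apply_two] at h0
      simp at h0
    · intro hh
      have h0 : wedge ![a5, b5] ![1, 3] = 0 := by
        rw [show wedge ![a5, b5] = 0 from hh]; rfl
      rw [wedge_apply_two] at h0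
      simp at h0
  · intro i j hij
    fin_cases i <;> fin_cases j
    · exact absurd rfl hij
    · show ⟪wedge ![a1, b1], wedge ![a2, b2]⟫_ℂ = 0
      rw [inner_wedge]
      simp only [Fin.sum_univ_four, a1_0,a1_1,a1_2,a1_3,b1_0,b1_1,b1_2,b1_3,a2_0,a2_1,a2_2,a2_3,b2_0,b2_1,b2_2,b2_3,a3_0,a3_1,a3_2,a3_3,b3_0,b3_1,b3_2,b3_3,a4_0,a4_1,a4_2,a4_3,b4_0,b4_1,b4_2,b4_3,a5_0,a5_1,a5_2,a5_3,b5_0,b5_1,b5_2,b5_3, map_one, map_zero, map_neg, conj_om]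
      linear_combination ((2 : ℂ) + (4 : ℂ)*om) * hom
    · show ⟪wedge ![a1, b1], wedge ![a3, b3]⟫_ℂ = 0
      rw [inner_wedge]
      simp only [Fin.sum_univ_four, a1_0,a1_1,a1_2,a1_3,b1_0,b1_1,b1_2,b1_3,a2_0,a2_1,a2_2,a2_3,b2_0,b2_1,b2_2,b2_3,a3_0,a3_1,a3_2,a3_3,b3_0,b3_1,b3_2,b3_3,a4_0,a4_1,a4_2,a4_3,b4_0,b4_1,b4_2,b4_3,a5_0,a5_1,a5_2,a5_3,b5_0,b5_1,b5_2,b5_3, map_one, map_zero, map_neg, conj_om]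
      linear_combination ((6 : ℂ) + (-2 : ℂ)*om + (2 : ℂ)*om^2) * hom
    · show ⟪wedge ![a1, b1], wedge ![a4, b4]⟫_ℂ = 0
      rw [inner_wedge]
      simp only [Fin.sum_univ_four, a1_0,a1_1,a1_2,a1_3,b1_0,b1_1,b1_2,b1_3,a2_0,a2_1,a2_2,a2_3,b2_0,b2_1,b2_2,b2_3,a3_0,a3_1,a3_2,a3_3,b3_0,b3_1,b3_2,b3_3,a4_0,a4_1,a4_2,a4_3,b4_0,b4_1,b4_2,b4_3,a5_0,a5_1,a5_2,a5_3,b5_0,b5_1,b5_2,b5_3, map_one, map_zero, map_neg, conj_om]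
      linear_combination (0:ℂ) * hom
    · show ⟪wedge ![a1, b1], wedge ![a5, b5]⟫_ℂ = 0
      rw [inner_wedge]
      simp only [Fin.sum_univ_four, a1_0,a1_1,a1_2,a1_3,b1_0,b1_1,b1_2,b1_3,a2_0,a2_1,a2_2,a2_3,b2_0,b2_1,b2_2,b2_3,a3_0,a3_1,a3_2,a3_3,b3_0,b3_1,b3_2,b3_3,a4_0,a4_1,a4_2,a4_3,b4_0,b4_1,b4_2,b4_3,a5_0,a5_1,a5_2,a5_3,b5_0,b5_1,b5_2,b5_3, map_one, map_zero, map_neg, conj_om]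
      linear_combination ((-2 : ℂ)*om) * hom
    · show ⟪wedge ![a2, b2], wedge ![a1, b1]⟫_ℂ = 0
      rw [inner_wedge]
      simp only [Fin.sum_univ_four, a1_0,a1_1,a1_2,a1_3,b1_0,b1_1,b1_2,b1_3,a2_0,a2_1,a2_2,a2_3,b2_0,b2_1,b2_2,b2_3,a3_0,a3_1,a3_2,a3_3,b3_0,b3_1,b3_2,b3_3,a4_0,a4_1,a4_2,a4_3,b4_0,b4_1,b4_2,b4_3,a5_0,a5_1,a5_2,a5_3,b5_0,b5_1,b5_2,b5_3, map_one, map_zero, map_neg, conj_om]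
      linear_combination ((2 : ℂ) + (4 : ℂ)*om^2) * hom
    · exact absurd rfl hij
    · show ⟪wedge ![a2, b2], wedge ![a3, b3]⟫_ℂ = 0
      rw [inner_wedge]
      simp only [Fin.sum_univ_four, a1_0,a1_1,a1_2,a1_3,b1_0,b1_1,b1_2,b1_3,a2_0,a2_1,a2_2,a2_3,b2_0,b2_1,b2_2,b2_3,a3_0,a3_1,a3_2,a3_3,b3_0,b3_1,b3_2,b3_3,a4_0,a4_1,a4_2,a4_3,b4_0,b4_1,b4_2,b4_3,a5_0,a5_1,a5_2,a5_3,b5_0,b5_1,b5_2,b5_3, map_one, map_zero, map_neg, conj_om]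
      linear_combination ((2 : ℂ) + (-2 : ℂ)*om + (6 : ℂ)*om^2) * hom
    · show ⟪wedge ![a2, b2], wedge ![a4, b4]⟫_ℂ = 0
      rw [inner_wedge]
      simp only [Fin.sum_univ_four, a1_0,a1_1,a1_2,a1_3,b1_0,b1_1,b1_2,b1_3,a2_0,a2_1,a2_2,a2_3,b2_0,b2_1,b2_2,b2_3,a3_0,a3_1,a3_2,a3_3,b3_0,b3_1,b3_2,b3_3,a4_0,a4_1,a4_2,a4_3,b4_0,b4_1,b4_2,b4_3,a5_0,a5_1,a5_2,a5_3,b5_0,b5_1,b5_2,b5_3, map_one, map_zero, map_neg, conj_om]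
      linear_combination (0:ℂ) * hom
    · show ⟪wedge ![a2, b2], wedge ![a5, b5]⟫_ℂ = 0
      rw [inner_wedge]
      simp only [Fin.sum_univ_four, a1_0,a1_1,a1_2,a1_3,b1_0,b1_1,b1_2,b1_3,a2_0,a2_1,a2_2,a2_3,b2_0,b2_1,b2_2,b2_3,a3_0,a3_1,a3_2,a3_3,b3_0,b3_1,b3_2,b3_3,a4_0,a4_1,a4_2,a4_3,b4_0,b4_1,b4_2,b4_3,a5_0,a5_1,a5_2,a5_3,b5_0,b5_1,b5_2,b5_3, map_one, map_zero, map_neg, conj_om]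
      linear_combination ((-2 : ℂ)*om) * hom
    · show ⟪wedge ![a3, b3], wedge ![a1, b1]⟫_ℂ = 0
      rw [inner_wedge]
      simp only [Fin.sum_univ_four, a1_0,a1_1,a1_2,a1_3,b1_0,b1_1,b1_2,b1_3,a2_0,a2_1,a2_2,a2_3,b2_0,b2_1,b2_2,b2_3,a3_0,a3_1,a3_2,a3_3,b3_0,b3_1,b3_2,b3_3,a4_0,a4_1,a4_2,a4_3,b4_0,b4_1,b4_2,b4_3,a5_0,a5_1,a5_2,a5_3,b5_0,b5_1,b5_2,b5_3, map_one, map_zero, map_neg, conj_om]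
      linear_combination ((6 : ℂ) + (-2 : ℂ)*om + (2 : ℂ)*om^3) * hom
    · show ⟪wedge ![a3, b3], wedge ![a2, b2]⟫_ℂ = 0
      rw [inner_wedge]
      simp only [Fin.sum_univ_four, a1_0,a1_1,a1_2,a1_3,b1_0,b1_1,b1_2,b1_3,a2_0,a2_1,a2_2,a2_3,b2_0,b2_1,b2_2,b2_3,a3_0,a3_1,a3_2,a3_3,b3_0,b3_1,b3_2,b3_3,a4_0,a4_1,a4_2,a4_3,b4_0,b4_1,b4_2,b4_3,a5_0,a5_1,a5_2,a5_3,b5_0,b5_1,b5_2,b5_3, map_one, map_zero, map_neg, conj_om]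
      linear_combination ((2 : ℂ) + (2 : ℂ)*om + (2 : ℂ)*om^3) * hom
    · exact absurd rfl hij
    · show ⟪wedge ![a3, b3], wedge ![a4, b4]⟫_ℂ = 0
      rw [inner_wedge]
      simp only [Fin.sum_univ_four, a1_0,a1_1,a1_2,a1_3,b1_0,b1_1,b1_2,b1_3,a2_0,a2_1,a2_2,a2_3,b2_0,b2_1,b2_2,b2_3,a3_0,a3_1,a3_2,a3_3,b3_0,b3_1,b3_2,b3_3,a4_0,a4_1,a4_2,a4_3,b4_0,b4_1,b4_2,b4_3,a5_0,a5_1,a5_2,a5_3,b5_0,b5_1,b5_2,b5_3, map_one, map_zero, map_neg, conj_om]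
      linear_combination (0:ℂ) * hom
    · show ⟪wedge ![a3, b3], wedge ![a5, b5]⟫_ℂ = 0
      rw [inner_wedge]
      simp only [Fin.sum_univ_four, a1_0,a1_1,a1_2,a1_3,b1_0,b1_1,b1_2,b1_3,a2_0,a2_1,a2_2,a2_3,b2_0,b2_1,b2_2,b2_3,a3_0,a3_1,a3_2,a3_3,b3_0,b3_1,b3_2,b3_3,a4_0,a4_1,a4_2,a4_3,b4_0,b4_1,b4_2,b4_3,a5_0,a5_1,a5_2,a5_3,b5_0,b5_1,b5_2,b5_3, map_one, map_zero, map_neg, conj_om]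
      linear_combination ((-2 : ℂ) + (2 : ℂ)*om^2 + (-2 : ℂ)*om^3) * hom
    · show ⟪wedge ![a4, b4], wedge ![a1, b1]⟫_ℂ = 0
      rw [inner_wedge]
      simp only [Fin.sum_univ_four, a1_0,a1_1,a1_2,a1_3,b1_0,b1_1,b1_2,b1_3,a2_0,a2_1,a2_2,a2_3,b2_0,b2_1,b2_2,b2_3,a3_0,a3_1,a3_2,a3_3,b3_0,b3_1,b3_2,b3_3,a4_0,a4_1,a4_2,a4_3,b4_0,b4_1,b4_2,b4_3,a5_0,a5_1,a5_2,a5_3,b5_0,b5_1,b5_2,b5_3, map_one, map_zero, map_neg, conj_om]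
      linear_combination (0:ℂ) * hom
    · show ⟪wedge ![a4, b4], wedge ![a2, b2]⟫_ℂ = 0
      rw [inner_wedge]
      simp only [Fin.sum_univ_four, a1_0,a1_1,a1_2,a1_3,b1_0,b1_1,b1_2,b1_3,a2_0,a2_1,a2_2,a2_3,b2_0,b2_1,b2_2,b2_3,a3_0,a3_1,a3_2,a3_3,b3_0,b3_1,b3_2,b3_3,a4_0,a4_1,a4_2,a4_3,b4_0,b4_1,b4_2,b4_3,a5_0,a5_1,a5_2,a5_3,b5_0,b5_1,b5_2,b5_3, map_one, map_zero, map_neg, conj_om]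
      linear_combination (0:ℂ) * hom
    · show ⟪wedge ![a4, b4], wedge ![a3, b3]⟫_ℂ = 0
      rw [inner_wedge]
      simp only [Fin.sum_univ_four, a1_0,a1_1,a1_2,a1_3,b1_0,b1_1,b1_2,b1_3,a2_0,a2_1,a2_2,a2_3,b2_0,b2_1,b2_2,b2_3,a3_0,a3_1,a3_2,a3_3,b3_0,b3_1,b3_2,b3_3,a4_0,a4_1,a4_2,a4_3,b4_0,b4_1,b4_2,b4_3,a5_0,a5_1,a5_2,a5_3,b5_0,b5_1,b5_2,b5_3, map_one, map_zero, map_neg, conj_om]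
      linear_combination (0:ℂ) * hom
    · exact absurd rfl hij
    · show ⟪wedge ![a4, b4], wedge ![a5, b5]⟫_ℂ = 0
      rw [inner_wedge]
      simp only [Fin.sum_univ_four, a1_0,a1_1,a1_2,a1_3,b1_0,b1_1,b1_2,b1_3,a2_0,a2_1,a2_2,a2_3,b2_0,b2_1,b2_2,b2_3,a3_0,a3_1,a3_2,a3_3,b3_0,b3_1,b3_2,b3_3,a4_0,a4_1,a4_2,a4_3,b4_0,b4_1,b4_2,b4_3,a5_0,a5_1,a5_2,a5_3,b5_0,b5_1,b5_2,b5_3, map_one, map_zero, map_neg, conj_om]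
      linear_combination (0:ℂ) * hom
    · show ⟪wedge ![a5, b5], wedge ![a1, b1]⟫_ℂ = 0
      rw [inner_wedge]
      simp only [Fin.sum_univ_four, a1_0,a1_1,a1_2,a1_3,b1_0,b1_1,b1_2,b1_3,a2_0,a2_1,a2_2,a2_3,b2_0,b2_1,b2_2,b2_3,a3_0,a3_1,a3_2,a3_3,b3_0,b3_1,b3_2,b3_3,a4_0,a4_1,a4_2,a4_3,b4_0,b4_1,b4_2,b4_3,a5_0,a5_1,a5_2,a5_3,b5_0,b5_1,b5_2,b5_3, map_one, map_zero, map_neg, conj_om]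
      linear_combination ((-2 : ℂ)*om) * hom
    · show ⟪wedge ![a5, b5], wedge ![a2, b2]⟫_ℂ = 0
      rw [inner_wedge]
      simp only [Fin.sum_univ_four, a1_0,a1_1,a1_2,a1_3,b1_0,b1_1,b1_2,b1_3,a2_0,a2_1,a2_2,a2_3,b2_0,b2_1,b2_2,b2_3,a3_0,a3_1,a3_2,a3_3,b3_0,b3_1,b3_2,b3_3,a4_0,a4_1,a4_2,a4_3,b4_0,b4_1,b4_2,b4_3,a5_0,a5_1,a5_2,a5_3,b5_0,b5_1,b5_2,b5_3, map_one, map_zero, map_neg, conj_om]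
      linear_combination ((-2 : ℂ)*om) * hom
    · show ⟪wedge ![a5, b5], wedge ![a3, b3]⟫_ℂ = 0
      rw [inner_wedge]
      simp only [Fin.sum_univ_four, a1_0,a1_1,a1_2,a1_3,b1_0,b1_1,b1_2,b1_3,a2_0,a2_1,a2_2,a2_3,b2_0,b2_1,b2_2,b2_3,a3_0,a3_1,a3_2,a3_3,b3_0,b3_1,b3_2,b3_3,a4_0,a4_1,a4_2,a4_3,b4_0,b4_1,b4_2,b4_3,a5_0,a5_1,a5_2,a5_3,b5_0,b5_1,b5_2,b5_3, map_one, map_zero, map_neg, conj_om]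
      linear_combination ((-2 : ℂ) + (2 : ℂ)*om + (-2 : ℂ)*om^2) * hom
    · show ⟪wedge ![a5, b5], wedge ![a4, b4]⟫_ℂ = 0
      rw [inner_wedge]
      simp only [Fin.sum_univ_four, a1_0,a1_1,a1_2,a1_3,b1_0,b1_1,b1_2,b1_3,a2_0,a2_1,a2_2,a2_3,b2_0,b2_1,b2_2,b2_3,a3_0,a3_1,a3_2,a3_3,b3_0,b3_1,b3_2,b3_3,a4_0,a4_1,a4_2,a4_3,b4_0,b4_1,b4_2,b4_3,a5_0,a5_1,a5_2,a5_3,b5_0,b5_1,b5_2,b5_3, map_one, map_zero, map_neg, conj_om]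
      linear_combination (0:ℂ) * hom
    · exact absurd rfl hij
  · intro v w h
    have h1 := h 0
    have h2 := h 1
    have h3 := h 2
    have h4 := h 3
    have h5 := h 4
    simp only [Matrix.cons_val_zero, Matrix.cons_val_one, Matrix.head_cons,
      Matrix.cons_val_two, Matrix.tail_cons, Matrix.cons_val_three,
      Matrix.cons_val_four, Matrix.cons_val_fin_one] at h1 h2 h3 h4 h5
    rw [inner_wedge] at h1 h2 h3 h4 h5
    simp only [Fin.sum_univ_four, a1_0,a1_1,a1_2,a1_3,b1_0,b1_1,b1_2,b1_3,a2_0,a2_1,a2_2,a2_3,b2_0,b2_1,b2_2,b2_3,a3_0,a3_1,a3_2,a3_3,b3_0,b3_1,b3_2,b3_3,a4_0,a4_1,a4_2,a4_3,b4_0,b4_1,b4_2,b4_3,a5_0,a5_1,a5_2,a5_3,b5_0,b5_1,b5_2,b5_3, map_one, map_zero, map_neg, conj_om] at h1 h2 h3 h4 h5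
    have hq01 : v 0 * w 1 - v 1 * w 0 = 0 := by
      linear_combination ((1/12 : ℂ)) * h1 + ((-1/12 : ℂ) + (-1/12 : ℂ)*om) * h2 + ((1/12 : ℂ)) * h3 + ((1/4 : ℂ)) * h4 + ((-1/6 : ℂ)*v 3*w 2 + (-1/6 : ℂ)*v 3*w 1 + (1/6 : ℂ)*v 3*w 0 + (1/6 : ℂ)*v 2*w 3 + (1/6 : ℂ)*v 2*w 1 + (-1/6 : ℂ)*v 2*w 0 + (1/6 : ℂ)*v 1*w 3 + (-1/6 : ℂ)*v 1*w 2 + (-1/6 : ℂ)*v 1*w 0 + (-1/6 : ℂ)*v 0*w 3 + (1/6 : ℂ)*v 0*w 2 + (1/6 : ℂ)*v 0*w 1 + (1/3 : ℂ)*om*v 3*w 2 + (1/6 : ℂ)*om*v 3*w 1 + (-1/6 : ℂ)*om*v 3*w 0 + (-1/3 : ℂ)*om*v 2*w 3 + (-1/6 : ℂ)*om*v 2*w 1 + (1/6 : ℂ)*om*v 2*w 0 + (-1/6 : ℂ)*om*v 1*w 3 + (1/6 : ℂ)*om*v 1*w 2 + (1/6 : ℂ)*om*v 1*w 0 + (1/6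 : ℂ)*om*v 0*w 3 + (-1/6 : ℂ)*om*v 0*w 2 + (-1/6 : ℂ)*om*v 0*w 1 + (-1/6 : ℂ)*om^2*v 3*w 2 + (1/6 : ℂ)*om^2*v 2*w 3 + (-1/6 : ℂ)*om^3*v 2*w 0 + (-1/6 : ℂ)*om^3*v 1*w 0 + (1/6 : ℂ)*om^3*v 0*w 2 + (1/6 : ℂ)*om^3*v 0*w 1) * hom
    have hq02 : v 0 * w 2 - v 2 * w 0 = 0 := by
      linear_combination ((1/12 : ℂ)) * h1 + ((-1/12 : ℂ) + (-1/12 : ℂ)*om) * h2 + ((1/12 : ℂ)) * h3 + ((-1/4 : ℂ)) * h4 + ((-1/6 : ℂ)*v 3*w 2 + (-1/6 : ℂ)*v 3*w 1 + (1/6 : ℂ)*v 3*w 0 + (1/6 : ℂ)*v 2*w 3 + (1/6 : ℂ)*v 2*w 1 + (-1/6 : ℂ)*v 2*w 0 + (1/6 : ℂ)*v 1*w 3 + (-1/6 : ℂ)*v 1*w 2 + (-1/6 : ℂ)*v 1*w 0 + (-1/6 : ℂ)*v 0*w 3 + (1/6 : ℂ)*v 0*w 2 + (1/6 : ℂ)*v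 0*w 1 + (1/3 : ℂ)*om*v 3*w 2 + (1/6 : ℂ)*om*v 3*w 1 + (-1/6 : ℂ)*om*v 3*w 0 + (-1/3 : ℂ)*om*v 2*w 3 + (-1/6 : ℂ)*om*v 2*w 1 + (1/6 : ℂ)*om*v 2*w 0 + (-1/6 : ℂ)*om*v 1*w 3 + (1/6 : ℂ)*om*v 1*w 2 + (1/6 : ℂ)*om*v 1*w 0 + (1/6 : ℂ)*om*v 0*w 3 + (-1/6 : ℂ)*om*v 0*w 2 + (-1/6 : ℂ)*om*v 0*w 1 + (-1/6 : ℂ)*om^2*v 3*w 2 + (1/6 : ℂ)*om^2*v 2*w 3 + (-1/6 : ℂ)*om^3*v 2*w 0 + (-1/6 : ℂ)*om^3*v 1*w 0 + (1/6 : ℂ)*om^3*v 0*w 2 + (1/6 : ℂ)*om^3*v 0*w 1) * hom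
    have hq0312 : (v 0 * w 3 - v 3 * w 0) + (v 1 * w 2 - v 2 * w 1) = 0 := by
      linear_combination ((1/6 : ℂ)) * h1 + ((1/6 : ℂ)*om) * h2 + ((1/6 : ℂ)*om) * h3 + ((-1/3 : ℂ)*v 3*w 2 + (-2/3 : ℂ)*v 3*w 0 + (1/3 : ℂ)*v 2*w 3 + (-2/3 : ℂ)*v 2*w 1 + (1/3 : ℂ)*v 2*w 0 + (2/3 : ℂ)*v 1*w 2 + (1/3 : ℂ)*v 1*w 0 + (2/3 : ℂ)*v 0*w 3 + (-1/3 : ℂ)*v 0*w 2 + (-1/3 : ℂ)*v 0*w 1 + (-1/3 : ℂ)*om*v 3*w 2 + (-1/3 : ℂ)*om*v 3*w 1 + (2/3 : ℂ)*om*v 3*w 0 + (1/3 : ℂ)*om*v 2*w 3 + (2/3 : ℂ)*om*v 2*w 1 + (1/3 : ℂ)*om*v 1*w 3 + (-2/3 : ℂ)*om*v 1*w 2 + (-2/3 : ℂ)*om*v 0*w 3 + (1/3 : ℂ)*om^2*v 3*w 2 + (-1/3 : ℂ)*om^2*v 2*w 3 + (-1/3 : ℂ)*om^2*v 2*w 0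 + (-1/3 : ℂ)*om^2*v 1*w 0 + (1/3 : ℂ)*om^2*v 0*w 2 + (1/3 : ℂ)*om^2*v 0*w 1 + (-1/3 : ℂ)*om^3*v 3*w 2 + (1/3 : ℂ)*om^3*v 2*w 3 + (1/3 : ℂ)*om^3*v 2*w 0 + (1/3 : ℂ)*om^3*v 1*w 0 + (-1/3 : ℂ)*om^3*v 0*w 2 + (-1/3 : ℂ)*om^3*v 0*w 1) * hom
    have hq13 : v 1 * w 3 - v 3 * w 1 = 0 := by
      linear_combination ((-1/12 : ℂ)*om) * h1 + ((-1/12 : ℂ)*om) * h2 + ((-1/12 : ℂ)) * h3 + ((1/4 : ℂ)) * h5 + ((1/6 : ℂ)*v 3*w 2 + (-1/3 : ℂ)*v 3*w 1 + (-1/6 : ℂ)*v 2*w 3 + (-1/6 : ℂ)*v 2*w 0 + (1/3 : ℂ)*v 1*w 3 + (-1/6 : ℂ)*v 1*w 0 + (1/6 : ℂ)*v 0*w 2 + (1/6 : ℂ)*v 0*w 1 + (1/6 : ℂ)*om*v 3*w 2 + (1/3 : ℂ)*om*v 3*w 1 + (-1/6 : ℂ)*om*v 3*w 0 + (-1/6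 : ℂ)*om*v 2*w 3 + (-1/6 : ℂ)*om*v 2*w 1 + (-1/3 : ℂ)*om*v 1*w 3 + (1/6 : ℂ)*om*v 1*w 2 + (1/6 : ℂ)*om*v 0*w 3 + (1/6 : ℂ)*om^2*v 3*w 2 + (-1/6 : ℂ)*om^2*v 2*w 3 + (1/6 : ℂ)*om^2*v 2*w 0 + (1/6 : ℂ)*om^2*v 1*w 0 + (-1/6 : ℂ)*om^2*v 0*w 2 + (-1/6 : ℂ)*om^2*v 0*w 1 + (-1/6 : ℂ)*om^3*v 2*w 0 + (-1/6 : ℂ)*om^3*v 1*w 0 + (1/6 : ℂ)*om^3*v 0*w 2 + (1/6 : ℂ)*om^3*v 0*w 1) * hom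
    have hq23 : v 2 * w 3 - v 3 * w 2 = 0 := by
      linear_combination ((-1/12 : ℂ) + (-1/12 : ℂ)*om) * h1 + ((-1/12 : ℂ) + (-1/12 : ℂ)*om) * h2 + ((1/12 : ℂ)*om) * h3 + ((1/4 : ℂ)*om) * h5 + ((-2/3 : ℂ)*v 3*w 2 + (-1/6 : ℂ)*v 3*w 0 + (2/3 : ℂ)*v 2*w 3 + (-1/6 : ℂ)*v 2*w 1 + (-1/6 : ℂ)*v 2*w 0 + (1/6 : ℂ)*v 1*w 2 + (-1/6 : ℂ)*v 1*w 0 + (1/6 : ℂ)*v 0*w 3 + (1/6 : ℂ)*v 0*w 2 + (1/6 : ℂ)*v 0*w 1 + (5/6 : ℂ)*om*v 3*w 2 + (1/3 : ℂ)*om*v 3*w 1 + (-5/6 : ℂ)*om*v 2*w 3 + (1/6 : ℂ)*om*v 2*w 0 + (-1/3 : ℂ)*om*v 1*w 3 + (1/6 : ℂ)*om*v 1*w 0 + (-1/6 : ℂ)*om*v 0*w 2 + (-1/6 : ℂ)*om*v 0*w 1 + (1/6 : ℂ)*om^2*v 3*w 2 + (-1/6 : ℂ)*om^2*v 2*w 3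 + (-1/6 : ℂ)*om^3*v 3*w 2 + (1/6 : ℂ)*om^3*v 2*w 3 + (-1/6 : ℂ)*om^3*v 2*w 0 + (-1/6 : ℂ)*om^3*v 1*w 0 + (1/6 : ℂ)*om^3*v 0*w 2 + (1/6 : ℂ)*om^3*v 0*w 1) * hom
    have hsq : (v 0 * w 3 - v 3 * w 0)^2 = 0 := by
      linear_combination (v 0 * w 3 - v 3 * w 0) * hq0312 + (v 2 * w 3 - v 3 * w 2) * hq01 - (v 1 * w 3 - v 3 * w 1) * hq02
    have hq03 : v 0 * w 3 - v 3 * w 0 = 0 := sq_eq_zero_iff.mp hsq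
    have hq12 : v 1 * w 2 - v 2 * w 1 = 0 := by linear_combination hq0312 - hq03
    clear h h1 h2 h3 h4 h5 hsq hq0312
    have key : ∀ i j : Fin 4, v i * w j - w i * v j = 0 := by
      intro i j
      fin_cases i <;> fin_cases j
      · show v 0 * w 0 - w 0 * v 0 = 0
        ring
      · show v 0 * w 1 - w 0 * v 1 = 0
        linear_combination hq01
      · show v 0 * w 2 - w 0 * v 2 = 0
        linear_combination hq02
      · show v 0 * w 3 - w 0 * v 3 = 0
        linear_combination hq03
      · show v 1 * w 0 - w 1 * v 0 = 0
        linear_combination -hq01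
      · show v 1 * w 1 - w 1 * v 1 = 0
        ring
      · show v 1 * w 2 - w 1 * v 2 = 0
        linear_combination hq12
      · show v 1 * w 3 - w 1 * v 3 = 0
        linear_combination hq13
      · show v 2 * w 0 - w 2 * v 0 = 0
        linear_combination -hq02
      · show v 2 * w 1 - w 2 * v 1 = 0
        linear_combination -hq12
      · show v 2 * w 2 - w 2 * v 2 = 0
        ring
      · show v 2 * w 3 - w 2 * v 3 = 0
        linear_combination hq23
      · show v 3 * w 0 - w 3 * v 0 = 0
        linear_combination -hq03
      · show v 3 * w 1 - w 3 * v 1 = 0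
        linear_combination -hq13
      · show v 3 * w 2 - w 3 * v 2 = 0
        linear_combination -hq23
      · show v 3 * w 3 - w 3 * v 3 = 0
        ring
    ext x
    rw [wedge_apply_two]
    exact key (x 0) (x 1)
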